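/- If a Boolean algebra A is ω-free over a set X (i.e., X generates A and every ω-preserving function from X into any nontrivial Boolean algebra extends to a unique homomorphism), then the set of nonzero elements of X is ω-independent. -/

import Mathlib

open scoped Classical

variable {A : Type*}

/-- ω-independence: `⊥ ∉ X`, (⊥1), (⊥3). -/
def OmegaIndep [BooleanAlgebra A] (X : Set A) : Prop :=
  (⊥ : A) ∉ X ∧
  (∀ F : Finset A, F.Nonempty → ↑F ⊆ X → F.sup id ≠ ⊤) ∧
  (∀ F G : Finset A, F.Nonempty → G.Nonempty → ↑F ⊆ X → ↑G ⊆ X →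
      F.inf id ≠ ⊥ → F.inf id ≤ G.sup id → (F ∩ G).Nonempty)

/-- n-independence: `⊥ ∉ X`, (⊥1), (⊥2)_n, (⊥3); `n = ⊤` codes ω. -/
def NIndep [BooleanAlgebra A] (n : ℕ∞) (X : Set A) : Prop :=
  (⊥ : A) ∉ X ∧
  (∀ F : Finset A, F.Nonempty → ↑F ⊆ X → F.sup id ≠ ⊤) ∧
  (∀ F : Finset A, F.Nonempty → ↑F ⊆ X → F.inf id = ⊥ →
      ∃ F' ⊆ F, (F'.card : ℕ∞) ≤ n ∧ F'.inf id = ⊥) ∧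
  (∀ F G : Finset A, F.Nonempty → G.Nonempty → ↑F ⊆ X → ↑G ⊆ X →
      F.inf id ≠ ⊥ → F.inf id ≤ G.sup id → (F ∩ G).Nonempty)

/-- Elementary product `∏_{x ∈ R} x^{ε x}`. -/
def elemProd [BooleanAlgebra A] (R : Finset A) (ε : A → Bool) : A :=
  R.inf (fun x => if ε x then x else xᶜ)

/-- `f` is n-preserving on `X` (`n = ⊤` codes ω-preserving). -/
def NPreserving [BooleanAlgebra A] {B : Type*} [BooleanAlgebra B]
    (n : ℕ∞) (X : Set A) (f : A → B) : Prop :=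
  ∀ F : Finset A, ↑F ⊆ X → (F.card : ℕ∞) ≤ n → F.inf id = ⊥ → F.inf f = ⊥

/-- Membership in the subalgebra generated by `X`. -/
inductive Gen [BooleanAlgebra A] (X : Set A) : A → Prop
  | of {x : A} : x ∈ X → Gen X x
  | bot : Gen X ⊥
  | top : Gen X ⊤
  | inf {x y : A} : Gen X x → Gen X y → Gen X (x ⊓ y)
  | sup {x y : A} : Gen X x → Gen X y → Gen X (x ⊔ y)
  | compl {x : A} : Gen X x → Gen X xᶜ

/-- `X` generates the Boolean algebra `A`. -/
def Generates [BooleanAlgebra A] (X : Set A) : Prop := ∀ a : A, Gen X a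

section AuxULift
variable {α : Type*}

instance auxHImpULift [HImp α] : HImp (ULift.{v} α) :=
  ⟨fun a b => ULift.up (a.down ⇨ b.down)⟩

instance auxBAULift [BooleanAlgebra α] : BooleanAlgebra (ULift.{v} α) :=
  ULift.down_injective.booleanAlgebra _ Iff.rfl Iff.rfl (fun _ _ => rfl) (fun _ _ => rfl) rfl rfl
    (fun _ => rfl) (fun _ _ => rfl) (fun _ _ => rfl)

end AuxULift

/-- if `A` is ω-free over `X` (X generates A and every ω-preserving map
from X to any nontrivial Boolean algebra extends to a unique homomorphism), then the
nonzero elements of `X` form an ω-independent set. -/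
theorem stmt_5.{u, v} {A : Type u} [BooleanAlgebra A] (X : Set A)
    (hgen : Generates X)
    (hfree : ∀ (B : Type v) [BooleanAlgebra B] [Nontrivial B] (f : A → B),
        NPreserving ⊤ X f →
        ∃! g : BoundedLatticeHom A B, ∀ x ∈ X, g x = f x) :
    OmegaIndep (X \ {⊥}) := by
  by_cases hA : (⊥ : A) = ⊤
  · -- trivial algebra: X \ {⊥} is empty
    have hempty : ∀ x : A, x = ⊥ := fun x => le_antisymm (le_of_le_of_eq le_top hA.symm) bot_le
    refine ⟨by simp, ?_, ?_⟩
    · intro F hF hFX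
      obtain ⟨x, hx⟩ := hF
      exact absurd (hempty x) (hFX hx).2
    · intro F G hF _ hFX _ _ _
      obtain ⟨x, hx⟩ := hF
      exact absurd (hempty x) (hFX hx).2
  · refine ⟨by simp, ?_, ?_⟩
    · -- (⊥1)
      intro F hF hFX htop
      -- constant ⊥ map is ω-preserving
      set f : A → ULift.{v} Bool := fun _ => ⊥ with hf
      have hpres : NPreserving ⊤ X f := by
        intro H _ _ hH
        obtain ⟨x, hx⟩ : H.Nonempty := by
          rcases H.eq_empty_or_nonempty with h | h
          · exfalso; apply hA; rw [h] at hH; simpa using hH.symm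
          · exact h
        exact le_antisymm (le_trans (Finset.inf_le hx) le_rfl) bot_le
      obtain ⟨g, hg, -⟩ := hfree (ULift.{v} Bool) f hpres
      have h1 : g (F.sup id) = F.sup (⇑g ∘ id) := map_finset_sup g F id
      have h2 : F.sup (⇑g ∘ id) = ⊥ := by
        apply le_antisymm _ bot_le
        apply Finset.sup_le
        intro x hx
        have : g x = f x := hg x (hFX hx).1
        simp [this, hf]
      rw [htop, map_top, h2] at h1
      exact absurd h1 (top_ne_bot)
    · -- (⊥3)
      intro F G hF hG hFX hGX hinf hle
      by_contra hFG
      set a := F.inf id with ha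
      set f : A → ULift.{v} Bool := fun x => if a ≤ x ∧ x ∉ G then ⊤ else ⊥ with hf
      have hpres : NPreserving ⊤ X f := by
        intro H _ _ hH
        by_contra hne
        have hall : ∀ x ∈ H, a ≤ x := by
          intro x hx
          by_contra hax
          have : f x = ⊥ := by simp [hf, hax]
          exact hne (le_antisymm (le_trans (Finset.inf_le hx) this.le) bot_le)
        have : a ≤ ⊥ := hH ▸ Finset.le_inf hall
        exact hinf (le_antisymm this bot_le)
      obtain ⟨g, hg, -⟩ := hfree (ULift.{v} Bool) f hpres
      -- g a = ⊤
      have hga : g a = ⊤ := by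
        have h1 : g (F.inf id) = F.inf (⇑g ∘ id) := map_finset_inf g F id
        have h2 : F.inf (⇑g ∘ id) = ⊤ := by
          apply le_antisymm le_top
          apply Finset.le_inf
          intro x hx
          have hgx : g x = f x := hg x (hFX hx).1
          have hxG : x ∉ G := by
            intro hxG
            exact absurd ⟨x, Finset.mem_inter.2 ⟨hx, hxG⟩⟩ hFG
          have hax : a ≤ x := Finset.inf_le hx
          have : f x = ⊤ := by simp [hf, hax, hxG]
          simp [hgx, this]
        rw [← ha] at h1; rw [h1, h2]
      -- g (sup G) = ⊥
      have hgs : g (G.sup id) = ⊥ := by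
        have h1 : g (G.sup id) = G.sup (⇑g ∘ id) := map_finset_sup g G id
        have h2 : G.sup (⇑g ∘ id) = ⊥ := by
          apply le_antisymm _ bot_le
          apply Finset.sup_le
          intro x hx
          have hgx : g x = f x := hg x (hGX hx).1
          have : f x = ⊥ := by simp [hf, hx]
          simp [hgx, this]
        rw [h1, h2]
      have := OrderHomClass.mono g hle
      rw [hga, hgs] at this
      exact absurd (le_antisymm this bot_le) top_ne_bot
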